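/- The partial derivatives ∂W/∂x = y² + (2N+1)x^{2N} and ∂W/∂y = 2xy form a regular sequence in ℚ[x,y]. -/

import Mathlib

open MvPolynomial

/-- `∂W/∂x = y² + (2N+1) x^{2N}`. -/
noncomputable def Wx (N : ℕ) : MvPolynomial (Fin 2) ℚ :=
  X 1 ^ 2 + C ((2 * N + 1 : ℕ) : ℚ) * X 0 ^ (2 * N)

/-- `∂W/∂y = 2 x y`. -/
noncomputable def Wy (N : ℕ) : MvPolynomial (Fin 2) ℚ :=
  C 2 * X 0 * X 1

/-- The variable-swapping equivalence `ℚ[x,y] ≃ (ℚ[x])[Y]` sending `y ↦ Y`. -/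
noncomputable def φ2 : MvPolynomial (Fin 2) ℚ ≃ₐ[ℚ] Polynomial (MvPolynomial (Fin 1) ℚ) :=
  (renameEquiv ℚ (Equiv.swap 0 1)).trans (finSuccEquiv ℚ 1)

lemma φ2_X1 : φ2 (X 1) = Polynomial.X := by
  have : φ2 (X 1) = finSuccEquiv ℚ 1 (rename (Equiv.swap 0 1) (X 1)) := rfl
  rw [this, rename_X, Equiv.swap_apply_right, finSuccEquiv_X_zero]

lemma φ2_X0 : φ2 (X 0) = Polynomial.C (X 0) := by
  have : φ2 (X 0) = finSuccEquiv ℚ 1 (rename (Equiv.swap 0 1) (X 0)) := rfl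
  rw [this, rename_X, Equiv.swap_apply_left]
  have : (1 : Fin 2) = Fin.succ 0 := rfl
  rw [this, finSuccEquiv_X_succ]

lemma φ2_C (r : ℚ) : φ2 (C r) = Polynomial.C (C r) := by
  have : φ2 (C r) = finSuccEquiv ℚ 1 (rename (Equiv.swap 0 1) (C r)) := rfl
  rw [this, rename_C, finSuccEquiv_apply]
  simp

lemma φ2_Wx (N : ℕ) : φ2 (Wx N) =
    Polynomial.X ^ 2 + Polynomial.C (C ((2 * N + 1 : ℕ) : ℚ) * X 0 ^ (2 * N)) := by
  rw [Wx, map_add, map_pow, map_mul, map_pow, φ2_X1, φ2_X0, φ2_C, ← Polynomial.C_pow,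
    ← Polynomial.C_mul]

lemma Wx_prime (N : ℕ) (hN : 1 ≤ N) : Prime (Wx N) := by
  suffices h : Prime (φ2 (Wx N)) by exact (MulEquiv.prime_iff φ2).mp h
  rw [φ2_Wx]
  set a : MvPolynomial (Fin 1) ℚ := C ((2 * N + 1 : ℕ) : ℚ) * X 0 ^ (2 * N) with ha
  have hmonic : (Polynomial.X ^ 2 + Polynomial.C a).Monic :=
    Polynomial.monic_X_pow_add_C a two_ne_zero
  have hdeg : (Polynomial.X ^ 2 + Polynomial.C a).natDegree = 2 :=
    Polynomial.natDegree_X_pow_add_C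
  rw [← UniqueFactorizationMonoid.irreducible_iff_prime]
  by_contra hirr
  obtain ⟨c₁, c₂, h0, h1⟩ :=
    (hmonic.not_irreducible_iff_exists_add_mul_eq_coeff hdeg).mp hirr
  have e0 : (Polynomial.X ^ 2 + Polynomial.C a).coeff 0 = a := by simp
  have e1 : (Polynomial.X ^ 2 + Polynomial.C a).coeff 1 = 0 := by
    simp [Polynomial.coeff_X_pow]
  rw [e0] at h0
  rw [e1] at h1
  have hc2 : c₂ = -c₁ := by linear_combination -h1
  rw [hc2] at h0
  have hev := congrArg (eval (fun _ => (1 : ℚ))) h0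
  simp [ha] at hev
  set t := eval (fun _ => (1 : ℚ)) c₁ with ht
  have h2 : (0:ℚ) < (2 * N + 1 : ℕ) := by positivity
  nlinarith [sq_nonneg t, h2, hev]

/-- The partial derivatives `∂W/∂x = y² + (2N+1)x^{2N}` and `∂W/∂y = 2xy` form
a regular sequence in `ℚ[x,y]`: the first is a nonzerodivisor, and the second is
a nonzerodivisor in the quotient by the ideal generated by the first. -/
theorem partials_regular_sequence (N : ℕ) (hN : 1 ≤ N) :
    (∀ p : MvPolynomial (Fin 2) ℚ, Wx N * p = 0 → p = 0) ∧
    (∀ q : MvPolynomial (Fin 2) ℚ ⧸ Ideal.span {Wx N},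
      Ideal.Quotient.mk (Ideal.span {Wx N}) (Wy N) * q = 0 → q = 0) := by
  have hpr := Wx_prime N hN
  have hWx0 : Wx N ≠ 0 := hpr.ne_zero
  have hφWx : (φ2 (Wx N)).natDegree = 2 := by
    rw [φ2_Wx]; exact Polynomial.natDegree_X_pow_add_C
  have hnd : ∀ u : MvPolynomial (Fin 2) ℚ, φ2 u ≠ 0 → (φ2 u).natDegree < 2 →
      ¬ Wx N ∣ u := by
    intro u hu hlt hdvd
    have : (φ2 (Wx N)).natDegree ≤ (φ2 u).natDegree :=
      Polynomial.natDegree_le_of_dvd (map_dvd φ2.toAlgHom hdvd) hu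
    omega
  have hx : ¬ Wx N ∣ X 0 := by
    apply hnd
    · rw [φ2_X0]
      simp [MvPolynomial.X_ne_zero]
    · rw [φ2_X0]
      simp
  have hy : ¬ Wx N ∣ X 1 := by
    apply hnd
    · rw [φ2_X1]; exact Polynomial.X_ne_zero
    · rw [φ2_X1]; simp
  have h2 : ¬ Wx N ∣ C (2 : ℚ) := fun h =>
    hpr.not_isUnit (isUnit_of_dvd_unit h
      (IsUnit.of_mul_eq_one (a := C 2) (C (1/2)) (by rw [← C_mul]; norm_num)))
  refine ⟨fun p hp => ?_, fun q hq => ?_⟩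
  · rcases mul_eq_zero.mp hp with h | h
    · exact absurd h hWx0
    · exact h
  · obtain ⟨p, rfl⟩ := Ideal.Quotient.mk_surjective q
    rw [← map_mul, Ideal.Quotient.eq_zero_iff_mem, Ideal.mem_span_singleton, Wy] at hq
    rw [Ideal.Quotient.eq_zero_iff_mem, Ideal.mem_span_singleton]
    rcases hpr.dvd_mul.mp hq with h | h
    · rcases hpr.dvd_mul.mp h with h' | h'
      · rcases hpr.dvd_mul.mp h' with h'' | h''
        · exact absurd h'' h2
        · exact absurd h'' hx
      · exact absurd h' hy
    · exact h
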